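/- Let t > r ≥ 1 be integers and let S be a t×t real symmetric positive semidefinite matrix with eigenvalues λ_1 ≥ ... ≥ λ_t and orthonormal eigenvectors v_1,...,v_t. Let A* ∈ ℝ^{t×r} have columns v_1,...,v_r, and let U ∈ ℝ^{t×r} be any matrix with UᵀU = Id_r. Then tr[S(A*A*ᵀ - UUᵀ)] ≥ (λ_r - λ_{r+1}) · Σ_{i=r+1}^t ‖Uᵀv_i‖². -/

import Mathlib

open Matrix

private lemma quad_eq {m n : ℕ} (A : Matrix (Fin m) (Fin n) ℝ) (x : Fin m → ℝ) :
    x ⬝ᵥ (A * Aᵀ).mulVec x = (Aᵀ.mulVec x) ⬝ᵥ (Aᵀ.mulVec x) := by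
  rw [← Matrix.mulVec_mulVec, Matrix.dotProduct_mulVec, ← Matrix.mulVec_transpose]

private lemma trace_vmv {n : ℕ} (a : Fin n → ℝ) (M : Matrix (Fin n) (Fin n) ℝ) :
    Matrix.trace (Matrix.vecMulVec a a * M) = a ⬝ᵥ M.mulVec a := by
  simp only [Matrix.trace, Matrix.diag, Matrix.mul_apply, Matrix.vecMulVec_apply,
    dotProduct, Matrix.mulVec, Finset.mul_sum]
  rw [Finset.sum_comm]
  exact Finset.sum_congr rfl fun i _ => Finset.sum_congr rfl fun j _ => by ring

private lemma card_filter_lt' (t r : ℕ) (hrt : r < t) :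
    (Finset.univ.filter (fun i : Fin t => (i:ℕ) < r)).card = r := by
  have : (Finset.univ.filter (fun i : Fin t => (i:ℕ) < r))
      = Finset.map (Fin.castLEEmb hrt.le) Finset.univ := by
    ext i
    simp only [Finset.mem_filter, Finset.mem_univ, true_and, Finset.mem_map,
      Fin.castLEEmb_apply]
    constructor
    · intro h; exact ⟨⟨i, h⟩, by simp [Fin.ext_iff]⟩
    · rintro ⟨k, rfl⟩; exact k.isLt
  simp [this]

/-- Key spectral inequality from the proof of Lemma E.2: the PCA suboptimality gap of a
rank-r projector UUᵀ relative to the top-r eigenprojector A*A*ᵀ controls the energy of U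
in the bottom eigenspace. -/
theorem pca_suboptimality_gap
    (t r : ℕ) (hr : 1 ≤ r) (hrt : r < t)
    (S : Matrix (Fin t) (Fin t) ℝ) (lam : Fin t → ℝ) (v : Fin t → Fin t → ℝ)
    (hortho : ∀ i j, dotProduct (v i) (v j) = if i = j then 1 else 0)
    (hdecomp : S = ∑ i, lam i • Matrix.vecMulVec (v i) (v i))
    (hsorted : Antitone lam) (hpsd : ∀ i, 0 ≤ lam i)
    (U : Matrix (Fin t) (Fin r) ℝ) (hU : Uᵀ * U = 1)
    (Astar : Matrix (Fin t) (Fin r) ℝ)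
    (hAstar : ∀ (i : Fin t) (k : Fin r), Astar i k = v (Fin.castLE hrt.le k) i) :
    (lam ⟨r - 1, by omega⟩ - lam ⟨r, hrt⟩) *
        ∑ i ∈ Finset.univ.filter (fun i : Fin t => r ≤ (i : ℕ)),
          dotProduct (Uᵀ.mulVec (v i)) (Uᵀ.mulVec (v i))
      ≤ Matrix.trace (S * (Astar * Astarᵀ - U * Uᵀ)) := by
  classical
  set c : Fin t → ℝ := fun i => (Uᵀ.mulVec (v i)) ⬝ᵥ (Uᵀ.mulVec (v i)) with hcdef
  have hc0 : ∀ i, 0 ≤ c i := fun i =>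
    Finset.sum_nonneg fun j _ => mul_self_nonneg _
  -- the orthogonal matrix V whose rows are the v i
  set V : Matrix (Fin t) (Fin t) ℝ := Matrix.of v with hVdef
  have hVVt : V * Vᵀ = 1 := by
    ext i j
    simpa [Matrix.mul_apply, Matrix.one_apply, hVdef, dotProduct] using hortho i j
  have hVtV : Vᵀ * V = 1 := mul_eq_one_comm.mp hVVt
  -- ∑ c = r
  have hci : ∀ i, c i = (V * (U * Uᵀ) * Vᵀ) i i := by
    intro i
    show (Uᵀ.mulVec (v i)) ⬝ᵥ (Uᵀ.mulVec (v i)) = (V * (U * Uᵀ) * Vᵀ) i i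
    rw [← quad_eq]
    simp only [Matrix.mul_apply, Matrix.mulVec, dotProduct, Matrix.transpose_apply,
      hVdef, Matrix.of_apply, Finset.mul_sum, Finset.sum_mul]
    rw [Finset.sum_comm]
    exact Finset.sum_congr rfl fun a _ => Finset.sum_congr rfl fun b _ =>
      Finset.sum_congr rfl fun k _ => by ring
  have hsumc : ∑ i, c i = (r : ℝ) := by
    have : ∑ i, c i = Matrix.trace (V * (U * Uᵀ) * Vᵀ) := by
      simp only [Matrix.trace, Matrix.diag]
      exact Finset.sum_congr rfl fun i _ => hci i
    rw [this, Matrix.trace_mul_cycle, hVtV, Matrix.one_mul,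
      Matrix.trace_mul_comm, hU, Matrix.trace_one]
    simp
  -- c i ≤ 1
  have hc1 : ∀ i, c i ≤ 1 := by
    intro i
    set w : Fin r → ℝ := Uᵀ.mulVec (v i) with hw
    have hvv : v i ⬝ᵥ v i = 1 := by simpa using hortho i i
    have hvUw : v i ⬝ᵥ U.mulVec w = w ⬝ᵥ w := by
      rw [Matrix.dotProduct_mulVec, ← Matrix.mulVec_transpose, ← hw]
    have hUwUw : (U.mulVec w) ⬝ᵥ (U.mulVec w) = w ⬝ᵥ w := by
      rw [Matrix.dotProduct_mulVec, ← Matrix.mulVec_transpose,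
        Matrix.mulVec_mulVec, hU, Matrix.one_mulVec]
    have hUwv : (U.mulVec w) ⬝ᵥ v i = w ⬝ᵥ w := by
      rw [dotProduct_comm]; exact hvUw
    have hx : (0:ℝ) ≤ (v i - U.mulVec w) ⬝ᵥ (v i - U.mulVec w) :=
      Finset.sum_nonneg fun j _ => mul_self_nonneg _
    have hexp : (v i - U.mulVec w) ⬝ᵥ (v i - U.mulVec w)
        = v i ⬝ᵥ v i - v i ⬝ᵥ U.mulVec w - U.mulVec w ⬝ᵥ v i + U.mulVec w ⬝ᵥ U.mulVec w := by
      simp [sub_dotProduct, dotProduct_sub]; ring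
    rw [hexp, hvv, hvUw, hUwv, hUwUw] at hx
    have : c i = w ⬝ᵥ w := rfl
    linarith
  -- trace formula
  have htr : ∀ M : Matrix (Fin t) (Fin t) ℝ,
      Matrix.trace (S * M) = ∑ i, lam i * (v i ⬝ᵥ M.mulVec (v i)) := by
    intro M
    rw [hdecomp, Finset.sum_mul]
    simp only [Matrix.smul_mul, Matrix.trace_sum, Matrix.trace_smul, trace_vmv, smul_eq_mul]
  -- quadratic form for Astar
  have hAq : ∀ i, v i ⬝ᵥ (Astar * Astarᵀ).mulVec (v i) = if (i:ℕ) < r then 1 else 0 := by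
    intro i
    rw [quad_eq]
    have hwk : ∀ k : Fin r, Astarᵀ.mulVec (v i) k
        = if (Fin.castLE hrt.le k : Fin t) = i then 1 else 0 := by
      intro k
      have := hortho (Fin.castLE hrt.le k) i
      simpa [Matrix.mulVec, dotProduct, Matrix.transpose_apply, hAstar] using this
    simp only [dotProduct, hwk]
    have hsq : ∀ k : Fin r,
        (if (Fin.castLE hrt.le k : Fin t) = i then (1:ℝ) else 0)
          * (if (Fin.castLE hrt.le k : Fin t) = i then (1:ℝ) else 0)
        = if (Fin.castLE hrt.le k : Fin t) = i then 1 else 0 := by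
      intro k; split <;> simp
    simp only [hsq]
    by_cases h : (i:ℕ) < r
    · rw [if_pos h, Finset.sum_eq_single (⟨(i:ℕ), h⟩ : Fin r)]
      · simp [Fin.ext_iff]
      · intro k _ hk
        rw [if_neg]
        intro hek
        exact hk (by simpa [Fin.ext_iff] using hek)
      · simp
    · rw [if_neg h]
      refine Finset.sum_eq_zero fun k _ => ?_
      rw [if_neg]
      intro hek
      exact h (by simpa [Fin.ext_iff] using congrArg Fin.val hek ▸ k.isLt)
  -- the two traces
  set Afin := Finset.univ.filter (fun i : Fin t => (i:ℕ) < r) with hAfin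
  set Bfin := Finset.univ.filter (fun i : Fin t => r ≤ (i:ℕ)) with hBfin
  have htrA : Matrix.trace (S * (Astar * Astarᵀ)) = ∑ i ∈ Afin, lam i := by
    rw [htr]
    rw [hAfin, Finset.sum_filter]
    exact Finset.sum_congr rfl fun i _ => by rw [hAq]; split <;> simp
  have htrU : Matrix.trace (S * (U * Uᵀ)) = ∑ i, lam i * c i := by
    rw [htr]
    exact Finset.sum_congr rfl fun i _ => by rw [quad_eq]
  have hsplit : ∀ f : Fin t → ℝ, ∑ i, f i = ∑ i ∈ Afin, f i + ∑ i ∈ Bfin, f i := by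
    intro f
    have hB : Bfin = Finset.univ.filter (fun i : Fin t => ¬ (i:ℕ) < r) := by
      rw [hBfin]; simp [not_lt]
    rw [hAfin, hB, Finset.sum_filter_add_sum_filter_not]
  -- E
  set E : ℝ := ∑ i ∈ Bfin, c i with hE
  have hcardA : (Afin.card : ℝ) = (r : ℝ) := by
    rw [hAfin, card_filter_lt' t r hrt]
  have hAE : ∑ i ∈ Afin, (1 - c i) = E := by
    have h1 : ∑ i ∈ Afin, c i + E = (r : ℝ) := by rw [hE, ← hsplit]; exact hsumc
    have h2 : ∑ i ∈ Afin, (1 - c i) = (Afin.card : ℝ) - ∑ i ∈ Afin, c i := by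
      rw [Finset.sum_sub_distrib]; simp
    rw [h2, hcardA]; linarith
  -- two inequalities
  have h1 : lam ⟨r - 1, by omega⟩ * E ≤ ∑ i ∈ Afin, lam i * (1 - c i) := by
    rw [← hAE, Finset.mul_sum]
    refine Finset.sum_le_sum fun i hi => ?_
    have hi' : (i:ℕ) < r := by
      rw [hAfin] at hi; exact (Finset.mem_filter.mp hi).2
    have hle : i ≤ (⟨r - 1, by omega⟩ : Fin t) := by
      rw [Fin.le_def]; simp; omega
    exact mul_le_mul_of_nonneg_right (hsorted hle) (by linarith [hc1 i])
  have h2 : ∑ i ∈ Bfin, lam i * c i ≤ lam ⟨r, hrt⟩ * E := by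
    rw [hE, Finset.mul_sum]
    refine Finset.sum_le_sum fun i hi => ?_
    have hi' : r ≤ (i:ℕ) := by
      rw [hBfin] at hi; exact (Finset.mem_filter.mp hi).2
    have hle : (⟨r, hrt⟩ : Fin t) ≤ i := by rw [Fin.le_def]; simpa using hi'
    exact mul_le_mul_of_nonneg_right (hsorted hle) (hc0 i)
  -- conclude
  have hRHS : Matrix.trace (S * (Astar * Astarᵀ - U * Uᵀ))
      = ∑ i ∈ Afin, lam i * (1 - c i) - ∑ i ∈ Bfin, lam i * c i := by
    rw [Matrix.mul_sub, Matrix.trace_sub, htrA, htrU, hsplit (fun i => lam i * c i)]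
    have : ∑ i ∈ Afin, lam i * (1 - c i) = ∑ i ∈ Afin, lam i - ∑ i ∈ Afin, lam i * c i := by
      rw [← Finset.sum_sub_distrib]
      exact Finset.sum_congr rfl fun i _ => by ring
    rw [this]; ring
  rw [hRHS]
  have hgoal : (lam ⟨r - 1, by omega⟩ - lam ⟨r, hrt⟩) * E
      ≤ ∑ i ∈ Afin, lam i * (1 - c i) - ∑ i ∈ Bfin, lam i * c i := by
    rw [sub_mul]; linarith
  exact hgoal
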